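/- Van der Corput lemma (second-derivative case): if h is C² on [a,b] with |h''(x)| ≥ A > 0 on [a,b], and φ is C¹ on [a,b], then |∫_a^b e^{i h(x)} φ(x) dx| ≤ c·A^{-1/2}·(|φ(b)| + ∫_a^b |φ'(x)| dx) for a constant c independent of a, b, A, h, φ. -/

import Mathlib

open Set intervalIntegral
open MeasureTheory


private lemma norm_exp_I_mul (r : ℝ) : ‖Complex.exp (Complex.I * (r : ℂ))‖ = 1 := by
  rw [Complex.norm_exp]
  simp

private lemma le_on_Icc_of_le_on_Ioo {a b A : ℝ} (hab : a < b) {f : ℝ → ℝ}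
    (hf : ContinuousOn f (Icc a b)) (h : ∀ x ∈ Ioo a b, A ≤ f x) :
    ∀ x ∈ Icc a b, A ≤ f x := by
  intro x hx
  have hx' : x ∈ closure (Ioo a b) := by rw [closure_Ioo hab.ne]; exact hx
  have hne : (nhdsWithin x (Ioo a b)).NeBot := mem_closure_iff_nhdsWithin_neBot.1 hx'
  have ht : Filter.Tendsto f (nhdsWithin x (Ioo a b)) (nhds (f x)) :=
    (hf x hx).mono Ioo_subset_Icc_self
  exact ge_of_tendsto ht (eventually_nhdsWithin_of_forall h)

/-- trivial bound -/
private lemma vdc_triv {a b : ℝ} (hab : a ≤ b) (h : ℝ → ℝ) :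
    ‖∫ x in a..b, Complex.exp (Complex.I * (h x : ℂ))‖ ≤ b - a := by
  have := intervalIntegral.norm_integral_le_of_norm_le_const
    (C := 1) (f := fun x => Complex.exp (Complex.I * (h x : ℂ))) (a := a) (b := b)
    (fun x _ => le_of_eq (norm_exp_I_mul (h x)))
  simpa [abs_of_nonneg (sub_nonneg.2 hab)] using this

/-- van der Corput, non-stationary phase -/
private lemma vdc1 {a b eps : ℝ} {h g k : ℝ → ℝ} (hab : a ≤ b) (heps : 0 < eps)
    (hh : ContinuousOn h (Icc a b)) (hg : ContinuousOn g (Icc a b))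
    (hk : ContinuousOn k (Icc a b))
    (hdg : ∀ x ∈ Ioo a b, HasDerivAt h (g x) x)
    (hdk : ∀ x ∈ Ioo a b, HasDerivAt g (k x) x)
    (hge : ∀ x ∈ Icc a b, eps ≤ |g x|)
    (hkpos : ∀ x ∈ Icc a b, 0 ≤ k x) :
    ‖∫ x in a..b, Complex.exp (Complex.I * (h x : ℂ))‖ ≤ 4 / eps := by
  have huIcc : uIcc a b = Icc a b := uIcc_of_le hab
  have hmin : min a b = a := min_eq_left hab
  have hmax : max a b = b := max_eq_right hab
  have hgne : ∀ x ∈ Icc a b, g x ≠ 0 := by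
    intro x hx h0
    have := hge x hx; rw [h0, abs_zero] at this; linarith
  have hne : ∀ x ∈ Icc a b, (Complex.I * (g x : ℂ)) ≠ 0 := by
    intro x hx
    exact mul_ne_zero Complex.I_ne_zero (by simpa using hgne x hx)
  set u : ℝ → ℂ := fun x => (Complex.I * (g x : ℂ))⁻¹ with hu_def
  set u' : ℝ → ℂ := fun x => -((Complex.I * (g x : ℂ)) ^ 2)⁻¹ * (Complex.I * (k x : ℂ)) with hu'_def
  set v : ℝ → ℂ := fun x => Complex.exp (Complex.I * (h x : ℂ)) with hv_def
  set v' : ℝ → ℂ := fun x => Complex.I * (g x : ℂ) * Complex.exp (Complex.I * (h x : ℂ)) with hv'_def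
  have hgc : ContinuousOn (fun x => Complex.I * (g x : ℂ)) (Icc a b) :=
    continuousOn_const.mul (Complex.continuous_ofReal.comp_continuousOn hg)
  have hkc : ContinuousOn (fun x => Complex.I * (k x : ℂ)) (Icc a b) :=
    continuousOn_const.mul (Complex.continuous_ofReal.comp_continuousOn hk)
  have huc : ContinuousOn u (Icc a b) := hgc.inv₀ hne
  have hvc : ContinuousOn v (Icc a b) :=
    Complex.continuous_exp.comp_continuousOn
      (continuousOn_const.mul (Complex.continuous_ofReal.comp_continuousOn hh))
  have hu'c : ContinuousOn u' (Icc a b) :=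
    (((hgc.pow 2).inv₀ (fun x hx => pow_ne_zero 2 (hne x hx))).neg).mul hkc
  have hv'c : ContinuousOn v' (Icc a b) := hgc.mul hvc
  have hud : ∀ x ∈ Ioo a b, HasDerivAt u (u' x) x := by
    intro x hx
    have : HasDerivAt (fun y => Complex.I * (g y : ℂ)) (Complex.I * (k x : ℂ)) x :=
      ((hdk x hx).ofReal_comp).const_mul Complex.I
    have hinv := hasDerivAt_inv (hne x (Ioo_subset_Icc_self hx))
    have h2 : HasDerivAt ((fun z : ℂ => z⁻¹) ∘ (fun y : ℝ => Complex.I * (g y : ℂ)))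
        (-((Complex.I * (g x : ℂ)) ^ 2)⁻¹ * (Complex.I * (k x : ℂ))) x :=
      HasDerivAt.comp (hh₂ := hinv) (hh := this)
    exact h2
  have hvd : ∀ x ∈ Ioo a b, HasDerivAt v (v' x) x := by
    intro x hx
    have : HasDerivAt (fun y => Complex.I * (h y : ℂ)) (Complex.I * (g x : ℂ)) x :=
      ((hdg x hx).ofReal_comp).const_mul Complex.I
    simpa [hv_def, hv'_def, mul_comm] using this.cexp
  have hu'i : IntervalIntegrable u' volume a b := by
    rw [← huIcc] at hu'c; exact hu'c.intervalIntegrable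
  have hv'i : IntervalIntegrable v' volume a b := by
    rw [← huIcc] at hv'c; exact hv'c.intervalIntegrable
  have ibp := intervalIntegral.integral_mul_deriv_eq_deriv_mul_of_hasDeriv_right
    (u := u) (v := v) (u' := u') (v' := v') (a := a) (b := b)
    (by rw [huIcc]; exact huc) (by rw [huIcc]; exact hvc)
    (by rw [hmin, hmax]; exact fun x hx => (hud x hx).hasDerivWithinAt)
    (by rw [hmin, hmax]; exact fun x hx => (hvd x hx).hasDerivWithinAt)
    hu'i hv'i
  have h1 : (∫ x in a..b, Complex.exp (Complex.I * (h x : ℂ))) = ∫ x in a..b, u x * v' x := by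
    apply intervalIntegral.integral_congr
    intro x hx
    rw [huIcc] at hx
    simp only [hu_def, hv'_def]
    rw [inv_mul_cancel_left₀ (hne x hx)]
  -- FTC for ∫ k/g²
  have hftc : (∫ x in a..b, k x / (g x) ^ 2) = (g a)⁻¹ - (g b)⁻¹ := by
    have hcont : ContinuousOn (fun x => -(g x)⁻¹) (uIcc a b) := by
      rw [huIcc]; exact (hg.inv₀ hgne).neg
    have hint : IntervalIntegrable (fun x => k x / (g x) ^ 2) volume a b := by
      have : ContinuousOn (fun x => k x / (g x) ^ 2) (Icc a b) :=
        hk.div (hg.pow 2) (fun x hx => pow_ne_zero 2 (hgne x hx))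
      rw [← huIcc] at this; exact this.intervalIntegrable
    have hder : ∀ x ∈ Ioo (min a b) (max a b),
        HasDerivWithinAt (fun y => -(g y)⁻¹) (k x / (g x) ^ 2) (Ioi x) x := by
      rw [hmin, hmax]
      intro x hx
      have := ((hdk x hx).inv (hgne x (Ioo_subset_Icc_self hx))).neg
      exact this.hasDerivWithinAt.congr_deriv (by ring)
    have := intervalIntegral.integral_eq_sub_of_hasDeriv_right hcont hder hint
    rw [this]; ring
  -- norms
  have hnv : ∀ x, ‖v x‖ = 1 := by
    intro x; simp only [hv_def]
    rw [Complex.norm_exp]; simp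
  have hnu : ∀ x ∈ Icc a b, ‖u x‖ ≤ 1 / eps := by
    intro x hx
    simp only [hu_def]
    rw [norm_inv, norm_mul, Complex.norm_I, one_mul, Complex.norm_real, Real.norm_eq_abs]
    rw [one_div]
    exact inv_anti₀ heps (hge x hx)
  have hnuv' : ∀ x ∈ Icc a b, ‖u' x * v x‖ = k x / (g x) ^ 2 := by
    intro x hx
    rw [norm_mul, hnv x, mul_one]
    simp only [hu'_def]
    rw [norm_mul, norm_neg, norm_inv, norm_pow, norm_mul, norm_mul, Complex.norm_I, one_mul,
      one_mul, Complex.norm_real, Complex.norm_real, Real.norm_eq_abs, Real.norm_eq_abs,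
      abs_of_nonneg (hkpos x hx), sq_abs, inv_mul_eq_div]
  have hbound2 : ‖∫ x in a..b, u' x * v x‖ ≤ 2 / eps := by
    have h2 := intervalIntegral.norm_integral_le_integral_norm (f := fun x => u' x * v x) (μ := volume) hab
    have h3 : (∫ x in a..b, ‖u' x * v x‖) = ∫ x in a..b, k x / (g x) ^ 2 := by
      apply intervalIntegral.integral_congr
      intro x hx; rw [huIcc] at hx; exact hnuv' x hx
    have ha' : a ∈ Icc a b := ⟨le_refl a, hab⟩
    have hb' : b ∈ Icc a b := ⟨hab, le_refl b⟩
    have h4 : (g a)⁻¹ - (g b)⁻¹ ≤ 2 / eps := by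
      have h5 : |(g a)⁻¹| ≤ 1 / eps := by
        rw [abs_inv, one_div]; exact inv_anti₀ heps (hge a ha')
      have h6 : |(g b)⁻¹| ≤ 1 / eps := by
        rw [abs_inv, one_div]; exact inv_anti₀ heps (hge b hb')
      have := abs_sub ((g a)⁻¹) ((g b)⁻¹)
      have h7 : (g a)⁻¹ - (g b)⁻¹ ≤ |(g a)⁻¹ - (g b)⁻¹| := le_abs_self _
      have h7b : (2:ℝ)/eps = 1/eps + 1/eps := by ring
      have h8 : |(g a)⁻¹ - (g b)⁻¹| ≤ |(g a)⁻¹| + |(g b)⁻¹| := abs_sub _ _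
      linarith
    calc ‖∫ x in a..b, u' x * v x‖ ≤ ∫ x in a..b, ‖u' x * v x‖ := h2
      _ = (g a)⁻¹ - (g b)⁻¹ := by rw [h3, hftc]
      _ ≤ 2 / eps := h4
  -- assemble
  rw [h1, ibp]
  have hna : ‖u a * v a‖ ≤ 1 / eps := by
    rw [norm_mul, hnv a, mul_one]; exact hnu a ⟨le_refl a, hab⟩
  have hnb : ‖u b * v b‖ ≤ 1 / eps := by
    rw [norm_mul, hnv b, mul_one]; exact hnu b ⟨hab, le_refl b⟩
  have := norm_sub_le (u b * v b - u a * v a) (∫ x in a..b, u' x * v x)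
  have h9 := norm_sub_le (u b * v b) (u a * v a)
  have h10 : (4:ℝ) / eps = 1/eps + 1/eps + 2/eps := by ring
  rw [h10]
  calc ‖u b * v b - u a * v a - ∫ x in a..b, u' x * v x‖
      ≤ ‖u b * v b - u a * v a‖ + ‖∫ x in a..b, u' x * v x‖ := this
    _ ≤ (‖u b * v b‖ + ‖u a * v a‖) + ‖∫ x in a..b, u' x * v x‖ := by linarith
    _ ≤ 1/eps + 1/eps + 2/eps := by linarith

private lemma vdc_grow {a b A : ℝ} {g k : ℝ → ℝ} (hg : ContinuousOn g (Icc a b))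
    (hdk : ∀ x ∈ Ioo a b, HasDerivAt g (k x) x)
    (hkA : ∀ x ∈ Icc a b, A ≤ k x) :
    ∀ x ∈ Icc a b, ∀ y ∈ Icc a b, x ≤ y → A * (y - x) ≤ g y - g x := by
  have hdiff : DifferentiableOn ℝ g (interior (Icc a b)) := by
    rw [interior_Icc]; exact fun x hx => ((hdk x hx).differentiableAt).differentiableWithinAt
  have hge' : ∀ x ∈ interior (Icc a b), A ≤ deriv g x := by
    rw [interior_Icc]; intro x hx; rw [(hdk x hx).deriv]
    exact hkA x (Ioo_subset_Icc_self hx)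
  exact fun x hx y hy hxy =>
    (convex_Icc a b).mul_sub_le_image_sub_of_le_deriv hg hdiff hge' x hx y hy hxy

/-- right-half case: `-√A ≤ g a` -/
private lemma vdc2posA {a b A : ℝ} {h g k : ℝ → ℝ} (hab : a ≤ b) (hA : 0 < A)
    (hh : ContinuousOn h (Icc a b)) (hg : ContinuousOn g (Icc a b))
    (hk : ContinuousOn k (Icc a b))
    (hdg : ∀ x ∈ Ioo a b, HasDerivAt h (g x) x)
    (hdk : ∀ x ∈ Ioo a b, HasDerivAt g (k x) x)
    (hkA : ∀ x ∈ Icc a b, A ≤ k x)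
    (hga : -Real.sqrt A ≤ g a) :
    ‖∫ x in a..b, Complex.exp (Complex.I * (h x : ℂ))‖ ≤ 6 / Real.sqrt A := by
  set r := Real.sqrt A with hr_def
  have hr : 0 < r := Real.sqrt_pos.2 hA
  have hr2 : r * r = A := Real.mul_self_sqrt hA.le
  have hkpos : ∀ x ∈ Icc a b, 0 ≤ k x := fun x hx => hA.le.trans (hkA x hx)
  have hgrow := vdc_grow hg hdk hkA
  have hmono : ∀ x ∈ Icc a b, ∀ y ∈ Icc a b, x ≤ y → g x ≤ g y := by
    intro x hx y hy hxy
    have := hgrow x hx y hy hxy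
    nlinarith
  have ha' : a ∈ Icc a b := ⟨le_refl a, hab⟩
  have hb' : b ∈ Icc a b := ⟨hab, le_refl b⟩
  have hvc : ContinuousOn (fun x => Complex.exp (Complex.I * (h x : ℂ))) (Icc a b) :=
    Complex.continuous_exp.comp_continuousOn
      (continuousOn_const.mul (Complex.continuous_ofReal.comp_continuousOn hh))
  by_cases hcase : r ≤ g a
  · -- g ≥ r everywhere
    have hge : ∀ x ∈ Icc a b, r ≤ |g x| := by
      intro x hx
      have := hmono a ha' x hx hx.1
      exact le_trans (le_trans hcase this) (le_abs_self _)
    calc ‖∫ x in a..b, Complex.exp (Complex.I * (h x : ℂ))‖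
        ≤ 4 / r := vdc1 hab hr hh hg hk hdg hdk hge hkpos
      _ ≤ 6 / r := div_le_div_of_nonneg_right (by norm_num) hr.le
  · push_neg at hcase
    by_cases hcase2 : g b ≤ r
    · -- short interval
      have hlen : b - a ≤ 2 / r := by
        have h1 := hgrow a ha' b hb' hab
        have h2 : g b - g a ≤ 2 * r := by linarith
        rw [le_div_iff₀ hr]
        nlinarith
      calc ‖∫ x in a..b, Complex.exp (Complex.I * (h x : ℂ))‖
          ≤ b - a := vdc_triv hab h
        _ ≤ 2 / r := hlen
        _ ≤ 6 / r := by apply (div_le_div_iff_of_pos_right hr).2; norm_num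
    · push_neg at hcase2
      obtain ⟨d, hd, hgd⟩ := intermediate_value_Icc hab hg ⟨hcase.le, hcase2.le⟩
      have hIcc1 : Icc a d ⊆ Icc a b := Icc_subset_Icc (le_refl a) hd.2
      have hIcc2 : Icc d b ⊆ Icc a b := Icc_subset_Icc hd.1 (le_refl b)
      have hint1 : IntervalIntegrable (fun x => Complex.exp (Complex.I * (h x : ℂ))) volume a d := by
        have := (hvc.mono hIcc1)
        rw [← uIcc_of_le hd.1] at this
        exact this.intervalIntegrable
      have hint2 : IntervalIntegrable (fun x => Complex.exp (Complex.I * (h x : ℂ))) volume d b := by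
        have := (hvc.mono hIcc2)
        rw [← uIcc_of_le hd.2] at this
        exact this.intervalIntegrable
      rw [← intervalIntegral.integral_add_adjacent_intervals hint1 hint2]
      have hb1 : ‖∫ x in a..d, Complex.exp (Complex.I * (h x : ℂ))‖ ≤ 2 / r := by
        have h1 := hgrow a ha' d hd hd.1
        have h2 : g d - g a ≤ 2 * r := by rw [hgd]; linarith
        have hlen : d - a ≤ 2 / r := by rw [le_div_iff₀ hr]; nlinarith
        exact (vdc_triv hd.1 h).trans hlen
      have hb2 : ‖∫ x in d..b, Complex.exp (Complex.I * (h x : ℂ))‖ ≤ 4 / r := by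
        apply vdc1 hd.2 hr (hh.mono hIcc2) (hg.mono hIcc2) (hk.mono hIcc2)
          (fun x hx => hdg x (Ioo_subset_Ioo hd.1 (le_refl b) hx))
          (fun x hx => hdk x (Ioo_subset_Ioo hd.1 (le_refl b) hx))
          ?_ (fun x hx => hkpos x (hIcc2 hx))
        intro x hx
        have := hmono d hd x (hIcc2 hx) hx.1
        rw [hgd] at this
        exact le_trans this (le_abs_self _)
      calc ‖(∫ x in a..d, Complex.exp (Complex.I * (h x : ℂ))) +
            ∫ x in d..b, Complex.exp (Complex.I * (h x : ℂ))‖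
          ≤ ‖∫ x in a..d, Complex.exp (Complex.I * (h x : ℂ))‖ +
            ‖∫ x in d..b, Complex.exp (Complex.I * (h x : ℂ))‖ := norm_add_le _ _
        _ ≤ 2 / r + 4 / r := by linarith
        _ = 6 / r := by ring

/-- full positive-second-derivative case -/
private lemma vdc2pos {a b A : ℝ} {h g k : ℝ → ℝ} (hab : a ≤ b) (hA : 0 < A)
    (hh : ContinuousOn h (Icc a b)) (hg : ContinuousOn g (Icc a b))
    (hk : ContinuousOn k (Icc a b))
    (hdg : ∀ x ∈ Ioo a b, HasDerivAt h (g x) x)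
    (hdk : ∀ x ∈ Ioo a b, HasDerivAt g (k x) x)
    (hkA : ∀ x ∈ Icc a b, A ≤ k x) :
    ‖∫ x in a..b, Complex.exp (Complex.I * (h x : ℂ))‖ ≤ 10 / Real.sqrt A := by
  set r := Real.sqrt A with hr_def
  have hr : 0 < r := Real.sqrt_pos.2 hA
  have hkpos : ∀ x ∈ Icc a b, 0 ≤ k x := fun x hx => hA.le.trans (hkA x hx)
  have hgrow := vdc_grow hg hdk hkA
  have hmono : ∀ x ∈ Icc a b, ∀ y ∈ Icc a b, x ≤ y → g x ≤ g y := by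
    intro x hx y hy hxy
    have := hgrow x hx y hy hxy
    nlinarith
  have ha' : a ∈ Icc a b := ⟨le_refl a, hab⟩
  have hb' : b ∈ Icc a b := ⟨hab, le_refl b⟩
  have hvc : ContinuousOn (fun x => Complex.exp (Complex.I * (h x : ℂ))) (Icc a b) :=
    Complex.continuous_exp.comp_continuousOn
      (continuousOn_const.mul (Complex.continuous_ofReal.comp_continuousOn hh))
  by_cases hcase : -r ≤ g a
  · calc ‖∫ x in a..b, Complex.exp (Complex.I * (h x : ℂ))‖
        ≤ 6 / r := vdc2posA hab hA hh hg hk hdg hdk hkA hcase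
      _ ≤ 10 / r := div_le_div_of_nonneg_right (by norm_num) hr.le
  · push_neg at hcase
    by_cases hcase2 : g b ≤ -r
    · -- g ≤ -r everywhere
      have hge : ∀ x ∈ Icc a b, r ≤ |g x| := by
        intro x hx
        have := hmono x hx b hb' hx.2
        have h2 : g x ≤ -r := le_trans this hcase2
        rw [abs_of_nonpos (by linarith)]
        linarith
      calc ‖∫ x in a..b, Complex.exp (Complex.I * (h x : ℂ))‖
          ≤ 4 / r := vdc1 hab hr hh hg hk hdg hdk hge hkpos
        _ ≤ 10 / r := div_le_div_of_nonneg_right (by norm_num) hr.le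
    · push_neg at hcase2
      obtain ⟨c, hc, hgc⟩ := intermediate_value_Icc hab hg ⟨hcase.le, hcase2.le⟩
      have hIcc1 : Icc a c ⊆ Icc a b := Icc_subset_Icc (le_refl a) hc.2
      have hIcc2 : Icc c b ⊆ Icc a b := Icc_subset_Icc hc.1 (le_refl b)
      have hint1 : IntervalIntegrable (fun x => Complex.exp (Complex.I * (h x : ℂ))) volume a c := by
        have := (hvc.mono hIcc1); rw [← uIcc_of_le hc.1] at this
        exact this.intervalIntegrable
      have hint2 : IntervalIntegrable (fun x => Complex.exp (Complex.I * (h x : ℂ))) volume c b := by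
        have := (hvc.mono hIcc2); rw [← uIcc_of_le hc.2] at this
        exact this.intervalIntegrable
      rw [← intervalIntegral.integral_add_adjacent_intervals hint1 hint2]
      have hb1 : ‖∫ x in a..c, Complex.exp (Complex.I * (h x : ℂ))‖ ≤ 4 / r := by
        apply vdc1 hc.1 hr (hh.mono hIcc1) (hg.mono hIcc1) (hk.mono hIcc1)
          (fun x hx => hdg x (Ioo_subset_Ioo (le_refl a) hc.2 hx))
          (fun x hx => hdk x (Ioo_subset_Ioo (le_refl a) hc.2 hx))
          ?_ (fun x hx => hkpos x (hIcc1 hx))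
        intro x hx
        have := hmono x (hIcc1 hx) c hc hx.2
        rw [hgc] at this
        rw [abs_of_nonpos (by linarith)]
        linarith
      have hb2 : ‖∫ x in c..b, Complex.exp (Complex.I * (h x : ℂ))‖ ≤ 6 / r := by
        apply vdc2posA hc.2 hA (hh.mono hIcc2) (hg.mono hIcc2) (hk.mono hIcc2)
          (fun x hx => hdg x (Ioo_subset_Ioo hc.1 (le_refl b) hx))
          (fun x hx => hdk x (Ioo_subset_Ioo hc.1 (le_refl b) hx))
          (fun x hx => hkA x (hIcc2 hx))
          (le_of_eq hgc.symm)
      calc ‖(∫ x in a..c, Complex.exp (Complex.I * (h x : ℂ))) +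
            ∫ x in c..b, Complex.exp (Complex.I * (h x : ℂ))‖
          ≤ ‖∫ x in a..c, Complex.exp (Complex.I * (h x : ℂ))‖ +
            ‖∫ x in c..b, Complex.exp (Complex.I * (h x : ℂ))‖ := norm_add_le _ _
        _ ≤ 4 / r + 6 / r := by linarith
        _ = 10 / r := by ring

/-- zero of k impossible: dichotomy helper -/
private lemma vdc_sign {a b A : ℝ} {k : ℝ → ℝ} (hab : a ≤ b) (hA : 0 < A)
    (hk : ContinuousOn k (Icc a b))
    (hkA : ∀ x ∈ Icc a b, A ≤ |k x|) (hsign : 0 < k a) :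
    ∀ x ∈ Icc a b, A ≤ k x := by
  intro x hx
  rcases lt_or_ge 0 (k x) with hpos | hneg
  · have := hkA x hx; rwa [abs_of_pos hpos] at this
  · exfalso
    have hxu : x ∈ uIcc a b := by rw [uIcc_of_le hab]; exact hx
    have hsub : uIcc x a ⊆ Icc a b := by
      rw [← uIcc_of_le hab]
      exact uIcc_subset_uIcc hxu left_mem_uIcc
    have hcont : ContinuousOn k (uIcc x a) := hk.mono hsub
    have h0 : (0:ℝ) ∈ uIcc (k x) (k a) := by
      rw [mem_uIcc]; left; exact ⟨hneg, hsign.le⟩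
    obtain ⟨y, hy, hky⟩ := intermediate_value_uIcc hcont h0
    have := hkA y (hsub hy)
    rw [hky, abs_zero] at this
    linarith

/-- both-signs version -/
private lemma vdc2 {a b A : ℝ} {h g k : ℝ → ℝ} (hab : a ≤ b) (hA : 0 < A)
    (hh : ContinuousOn h (Icc a b)) (hg : ContinuousOn g (Icc a b))
    (hk : ContinuousOn k (Icc a b))
    (hdg : ∀ x ∈ Ioo a b, HasDerivAt h (g x) x)
    (hdk : ∀ x ∈ Ioo a b, HasDerivAt g (k x) x)
    (hkA : ∀ x ∈ Icc a b, A ≤ |k x|) :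
    ‖∫ x in a..b, Complex.exp (Complex.I * (h x : ℂ))‖ ≤ 10 / Real.sqrt A := by
  have hr : 0 < Real.sqrt A := Real.sqrt_pos.2 hA
  rcases eq_or_lt_of_le hab with rfl | hab'
  · simp; positivity
  have hkne : ∀ x ∈ Icc a b, k x ≠ 0 := by
    intro x hx h0
    have := hkA x hx; rw [h0, abs_zero] at this; linarith
  have ha' : a ∈ Icc a b := ⟨le_refl a, hab⟩
  by_cases hsign : 0 < k a
  · exact vdc2pos hab hA hh hg hk hdg hdk (vdc_sign hab hA hk hkA hsign)
  · -- k negative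
    have hka : k a < 0 := lt_of_le_of_ne (not_lt.1 hsign) (hkne a ha')
    have hksign : ∀ x ∈ Icc a b, A ≤ -k x := by
      have := vdc_sign (k := fun x => -(k x)) hab hA hk.neg
        (fun x hx => by rw [abs_neg]; exact hkA x hx) (by simpa using hka)
      exact this
    have hneg := vdc2pos (h := fun y => -h y) (g := fun y => -g y) (k := fun y => -k y)
      hab hA hh.neg hg.neg hk.neg
      (fun x hx => (hdg x hx).neg) (fun x hx => (hdk x hx).neg) hksign
    have hptw : ∀ x : ℝ, Complex.exp (Complex.I * ((-h x : ℝ) : ℂ)) =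
        (starRingEnd ℂ) (Complex.exp (Complex.I * (h x : ℂ))) := by
      intro x
      rw [← Complex.exp_conj]
      congr 1
      rw [map_mul, Complex.conj_I, Complex.conj_ofReal]
      push_cast
      ring
    have hconj : (∫ x in a..b, Complex.exp (Complex.I * ((-h x : ℝ) : ℂ))) =
        (starRingEnd ℂ) (∫ x in a..b, Complex.exp (Complex.I * (h x : ℂ))) := by
      rw [intervalIntegral.integral_of_le hab, intervalIntegral.integral_of_le hab]
      simp_rw [hptw]
      exact integral_conj
    rw [show (∫ x in a..b, Complex.exp (Complex.I * (h x : ℂ))) =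
        (starRingEnd ℂ) (∫ x in a..b, Complex.exp (Complex.I * ((-h x : ℝ) : ℂ))) by
      rw [hconj, Complex.conj_conj]]
    rw [RCLike.norm_conj]
    exact hneg

/-- Van der Corput lemma, second-derivative case: if h is C² on [a,b] with |h''| ≥ A > 0,
    and φ is C¹, then |∫ e^{ih} φ| ≤ c A^{-1/2} (|φ(b)| + ∫ |φ'|). -/
theorem van_der_corput_second :
    ∃ c : ℝ, 0 < c ∧ ∀ (a b A : ℝ) (h : ℝ → ℝ) (φ : ℝ → ℂ),
      a < b → 0 < A →
      ContDiffOn ℝ 2 h (Icc a b) →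
      (∀ x ∈ Icc a b, A ≤ |deriv (deriv h) x|) →
      ContDiffOn ℝ 1 φ (Icc a b) →
      ‖∫ x in a..b, Complex.exp (Complex.I * (h x : ℂ)) * φ x‖ ≤
        c * A ^ (-(1 : ℝ) / 2) * (‖φ b‖ + ∫ x in a..b, ‖deriv φ x‖) := by
  refine ⟨10, by norm_num, ?_⟩
  intro a b A h φ hab hA h2 hA2 hφ1
  have hab' : a ≤ b := hab.le
  have huIcc : uIcc a b = Icc a b := uIcc_of_le hab'
  have hmin : min a b = a := min_eq_left hab'
  have hmax : max a b = b := max_eq_right hab'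
  have hud : UniqueDiffOn ℝ (Icc a b) := uniqueDiffOn_Icc hab
  set g : ℝ → ℝ := derivWithin h (Icc a b) with hg_def
  set k : ℝ → ℝ := derivWithin g (Icc a b) with hk_def
  have hgC : ContDiffOn ℝ 1 g (Icc a b) := h2.derivWithin hud (by norm_num)
  have hkC : ContDiffOn ℝ 0 k (Icc a b) := hgC.derivWithin hud (by norm_num)
  have hkc : ContinuousOn k (Icc a b) := hkC.continuousOn
  have hhc : ContinuousOn h (Icc a b) := h2.continuousOn
  have hgc : ContinuousOn g (Icc a b) := hgC.continuousOn
  have hdg : ∀ x ∈ Ioo a b, HasDerivAt h (g x) x := by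
    intro x hx
    have hd := (h2.differentiableOn (by norm_num)) x (Ioo_subset_Icc_self hx)
    exact hd.hasDerivWithinAt.hasDerivAt (Icc_mem_nhds hx.1 hx.2)
  have hdk : ∀ x ∈ Ioo a b, HasDerivAt g (k x) x := by
    intro x hx
    have hd := (hgC.differentiableOn (by norm_num)) x (Ioo_subset_Icc_self hx)
    exact hd.hasDerivWithinAt.hasDerivAt (Icc_mem_nhds hx.1 hx.2)
  have hkA : ∀ x ∈ Icc a b, A ≤ |k x| := by
    apply le_on_Icc_of_le_on_Ioo hab (continuous_abs.comp_continuousOn hkc)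
    intro x hx
    show A ≤ |k x|
    have h1 : k x = deriv g x := ((hdk x hx).deriv).symm
    have h2' : g =ᶠ[nhds x] deriv h := by
      apply Filter.eventuallyEq_of_mem (Ioo_mem_nhds hx.1 hx.2)
      exact fun y hy => ((hdg y hy).deriv).symm
    have h3 : deriv g x = deriv (deriv h) x := h2'.deriv_eq
    rw [h1, h3]
    exact hA2 x (Ioo_subset_Icc_self hx)
  -- the primitive
  set f : ℝ → ℂ := fun x => Complex.exp (Complex.I * (h x : ℂ)) with hf_def
  have hfc : ContinuousOn f (Icc a b) :=
    Complex.continuous_exp.comp_continuousOn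
      (continuousOn_const.mul (Complex.continuous_ofReal.comp_continuousOn hhc))
  set F : ℝ → ℂ := fun y => ∫ t in a..y, f t with hF_def
  have hFbound : ∀ y ∈ Icc a b, ‖F y‖ ≤ 10 / Real.sqrt A := by
    intro y hy
    have hsub : Icc a y ⊆ Icc a b := Icc_subset_Icc (le_refl a) hy.2
    have hsubo : Ioo a y ⊆ Ioo a b := Ioo_subset_Ioo (le_refl a) hy.2
    exact vdc2 hy.1 hA (hhc.mono hsub) (hgc.mono hsub) (hkc.mono hsub)
      (fun x hx => hdg x (hsubo hx)) (fun x hx => hdk x (hsubo hx))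
      (fun x hx => hkA x (hsub hx))
  have hFc : ContinuousOn F (Icc a b) := by
    rw [← huIcc]
    apply intervalIntegral.continuousOn_primitive_interval
    rw [huIcc]
    exact hfc.integrableOn_compact isCompact_Icc
  have hFd : ∀ x ∈ Ioo a b, HasDerivAt F (f x) x := by
    intro x hx
    apply intervalIntegral.integral_hasDerivAt_right
    · have hsub : Icc a x ⊆ Icc a b := Icc_subset_Icc (le_refl a) hx.2.le
      have := hfc.mono hsub
      rw [← uIcc_of_le hx.1.le] at this
      exact this.intervalIntegrable
    · exact ⟨Ioo a b, Ioo_mem_nhds hx.1 hx.2,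
        ((hfc.mono Ioo_subset_Icc_self)).aestronglyMeasurable measurableSet_Ioo⟩
    · exact (hfc x (Ioo_subset_Icc_self hx)).continuousAt (Icc_mem_nhds hx.1 hx.2)
  -- derivative of φ
  have hφc : ContinuousOn φ (Icc a b) := hφ1.continuousOn
  have hφ'C : ContDiffOn ℝ 0 (derivWithin φ (Icc a b)) (Icc a b) :=
    hφ1.derivWithin hud (by norm_num)
  have hφ'c : ContinuousOn (derivWithin φ (Icc a b)) (Icc a b) := hφ'C.continuousOn
  have hφd : ∀ x ∈ Ioo a b, HasDerivAt φ (deriv φ x) x := by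
    intro x hx
    have hd := (hφ1.differentiableOn (by norm_num)) x (Ioo_subset_Icc_self hx)
    have hD := hd.hasDerivWithinAt.hasDerivAt (Icc_mem_nhds hx.1 hx.2)
    rw [hD.deriv]
    exact hD
  have hφ'eq : EqOn (derivWithin φ (Icc a b)) (deriv φ) (Ioo a b) := by
    intro x hx
    have hd := (hφ1.differentiableOn (by norm_num)) x (Ioo_subset_Icc_self hx)
    have hD := hd.hasDerivWithinAt.hasDerivAt (Icc_mem_nhds hx.1 hx.2)
    exact hD.deriv.symm
  have hφ'int : IntervalIntegrable (deriv φ) volume a b := by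
    rw [intervalIntegrable_iff_integrableOn_Ioo_of_le hab']
    have h1 : IntegrableOn (derivWithin φ (Icc a b)) (Ioo a b) volume := by
      apply (hφ'c.integrableOn_compact isCompact_Icc).mono_set Ioo_subset_Icc_self
    exact h1.congr_fun hφ'eq measurableSet_Ioo
  have hfint : IntervalIntegrable f volume a b := by
    have := hfc
    rw [← huIcc] at this
    exact this.intervalIntegrable
  -- integration by parts
  have ibp := intervalIntegral.integral_mul_deriv_eq_deriv_mul_of_hasDeriv_right
    (u := φ) (v := F) (u' := deriv φ) (v' := f) (a := a) (b := b)
    (by rw [huIcc]; exact hφc) (by rw [huIcc]; exact hFc)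
    (by rw [hmin, hmax]; exact fun x hx => (hφd x hx).hasDerivWithinAt)
    (by rw [hmin, hmax]; exact fun x hx => (hFd x hx).hasDerivWithinAt)
    hφ'int hfint
  have hFa : F a = 0 := intervalIntegral.integral_same
  have heq : (∫ x in a..b, Complex.exp (Complex.I * (h x : ℂ)) * φ x)
      = φ b * F b - ∫ x in a..b, deriv φ x * F x := by
    have : (∫ x in a..b, Complex.exp (Complex.I * (h x : ℂ)) * φ x)
        = ∫ x in a..b, φ x * f x := by
      apply intervalIntegral.integral_congr
      intro x _; simp [hf_def, mul_comm]
    rw [this, ibp, hFa, mul_zero, sub_zero]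
  -- final bound
  have hrA : 0 < Real.sqrt A := Real.sqrt_pos.2 hA
  set C : ℝ := 10 / Real.sqrt A with hC_def
  have hC0 : 0 ≤ C := by positivity
  have hb1 : ‖φ b * F b‖ ≤ ‖φ b‖ * C := by
    rw [norm_mul]
    exact mul_le_mul_of_nonneg_left (hFbound b ⟨hab', le_refl b⟩) (norm_nonneg _)
  have hprod_int : IntervalIntegrable (fun x => deriv φ x * F x) volume a b := by
    apply hφ'int.mul_continuousOn
    rw [huIcc]; exact hFc
  have hb2 : ‖∫ x in a..b, deriv φ x * F x‖ ≤ (∫ x in a..b, ‖deriv φ x‖) * C := by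
    have h1 := intervalIntegral.norm_integral_le_integral_norm
      (f := fun x => deriv φ x * F x) (μ := volume) hab'
    have h2 : (∫ x in a..b, ‖deriv φ x * F x‖) ≤ ∫ x in a..b, ‖deriv φ x‖ * C := by
      apply intervalIntegral.integral_mono_on hab' hprod_int.norm
        (hφ'int.norm.mul_const C)
      intro x hx
      rw [norm_mul]
      exact mul_le_mul_of_nonneg_left (hFbound x hx) (norm_nonneg _)
    have h3 : (∫ x in a..b, ‖deriv φ x‖ * C) = (∫ x in a..b, ‖deriv φ x‖) * C :=
      intervalIntegral.integral_mul_const C _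
    linarith
  have hA12 : A ^ (-(1 : ℝ) / 2) = (Real.sqrt A)⁻¹ := by
    rw [show (-(1:ℝ) / 2) = -(1/2) by ring, Real.rpow_neg hA.le,
      ← Real.sqrt_eq_rpow]
  calc ‖∫ x in a..b, Complex.exp (Complex.I * (h x : ℂ)) * φ x‖
      = ‖φ b * F b - ∫ x in a..b, deriv φ x * F x‖ := by rw [heq]
    _ ≤ ‖φ b * F b‖ + ‖∫ x in a..b, deriv φ x * F x‖ := norm_sub_le _ _
    _ ≤ ‖φ b‖ * C + (∫ x in a..b, ‖deriv φ x‖) * C := by linarith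
    _ = 10 * A ^ (-(1 : ℝ) / 2) * (‖φ b‖ + ∫ x in a..b, ‖deriv φ x‖) := by
        rw [hA12, hC_def]
        field_simp
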